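/- (Theorem 3.1, special case) Under the same linear model and eigenvalue assumptions, the (unweighted) elastic-net estimator β̂(λ₂, λ₁) = argmin ‖y - Xβ‖₂² + λ₂‖β‖₂² + λ₁‖β‖₁ satisfies E‖β̂(λ₂, λ₁) - β*‖₂² ≤ 4(λ₂²‖β*‖₂² + Bpnσ² + λ₁²p)/(bn + λ₂)². -/

import Mathlib

open Matrix MeasureTheory

lemma final_aux {D S A2 C2 P T a c q l1 l2 : ℝ} (hD : 0 < D)
    (hA20 : 0 ≤ A2) (hC20 : 0 ≤ C2) (hP : 0 ≤ P) (hl1 : 0 ≤ l1) (hl2 : 0 ≤ l2)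
    (hT0 : 0 ≤ T) (hT2 : T ^ 2 = S) (ha2 : a ^ 2 = A2) (hc2 : c ^ 2 = C2) (hq2 : q ^ 2 = P)
    (ha0 : 0 ≤ a) (hc0 : 0 ≤ c) (hq0 : 0 ≤ q)
    (hcomb : 2 * D * S ≤ (2 * a + 2 * l2 * c + l1 * q) * T) :
    S * D ^ 2 ≤ 2 * A2 + 4 * l2 ^ 2 * C2 + l1 ^ 2 * P := by
  rcases eq_or_lt_of_le hT0 with hTz | hTpos
  · have hSz : S = 0 := by rw [← hT2, ← hTz]; ring
    rw [hSz, zero_mul]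
    have h1 : 0 ≤ 4 * l2 ^ 2 * C2 := mul_nonneg (by positivity) hC20
    have h2 : 0 ≤ l1 ^ 2 * P := mul_nonneg (sq_nonneg _) hP
    linarith
  · have hDT : 2 * D * T ≤ 2 * a + 2 * l2 * c + l1 * q := by
      have h := hcomb
      rw [← hT2] at h
      have h2 : (2 * D * T) * T ≤ (2 * a + 2 * l2 * c + l1 * q) * T := by linarith [h]
      exact le_of_mul_le_mul_right h2 hTpos
    have h2DT0 : 0 ≤ 2 * D * T := by positivity
    have hsq : (2 * D * T) ^ 2 ≤ (2 * a + 2 * l2 * c + l1 * q) ^ 2 :=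
      pow_le_pow_left₀ h2DT0 hDT 2
    nlinarith [hsq, sq_nonneg (a - 2 * l2 * c), sq_nonneg (a - l1 * q),
      sq_nonneg (2 * l2 * c - l1 * q), hT2, ha2, hc2, hq2]

lemma limit_aux {K M : ℝ} (hK0 : 0 ≤ K)
    (h : ∀ t : ℝ, 0 < t → t ≤ 1 → (1 - t) * K ≤ M) : K ≤ M := by
  by_contra hcon
  push_neg at hcon
  have hhalf := h (1/2) (by norm_num) (by norm_num)
  have hKpos : 0 < K := by nlinarith
  have ht0 : 0 < (K - M) / (2 * K) := div_pos (by linarith) (by linarith)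
  have ht1 : (K - M) / (2 * K) ≤ 1 := by
    rw [div_le_one (by linarith)]; nlinarith
  have hmain := h _ ht0 ht1
  have htK : (K - M) / (2 * K) * K = (K - M) / 2 := by field_simp
  nlinarith [hmain, htK]


lemma trace_eq_sum_eig {p : ℕ} (A : Matrix (Fin p) (Fin p) ℝ) (hA : A.IsHermitian) :
    A.trace = ∑ i, hA.eigenvalues i := by
  conv_lhs => rw [hA.spectral_theorem, Unitary.conjStarAlgAut_apply]
  rw [Matrix.trace_mul_cycle]
  rw [(Matrix.mem_unitaryGroup_iff').mp (hA.eigenvectorUnitary).2]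
  simp [Matrix.trace_diagonal]

lemma quadform_ge {p : ℕ} (A : Matrix (Fin p) (Fin p) ℝ) (hA : A.IsHermitian) (c : ℝ)
    (hc : ∀ i, c ≤ hA.eigenvalues i) (x : Fin p → ℝ) :
    c * (x ⬝ᵥ x) ≤ x ⬝ᵥ A.mulVec x := by
  set U : Matrix (Fin p) (Fin p) ℝ := (hA.eigenvectorUnitary : Matrix (Fin p) (Fin p) ℝ) with hUdef
  have hU1 : U * Uᵀ = 1 := by
    simpa [Matrix.star_eq_conjTranspose] using
      (Matrix.mem_unitaryGroup_iff).mp (hA.eigenvectorUnitary).2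
  set w : Fin p → ℝ := Uᵀ.mulVec x with hw
  have hxw : x ⬝ᵥ x = w ⬝ᵥ w := by
    rw [hw, Matrix.dotProduct_mulVec, Matrix.vecMul_transpose, Matrix.mulVec_mulVec, hU1,
      Matrix.one_mulVec]
  have hquad : x ⬝ᵥ A.mulVec x = ∑ i, hA.eigenvalues i * (w i)^2 := by
    conv_lhs => rw [hA.spectral_theorem, Unitary.conjStarAlgAut_apply]
    rw [Matrix.star_eq_conjTranspose, Matrix.conjTranspose_eq_transpose_of_trivial,
      ← Matrix.mulVec_mulVec, ← Matrix.mulVec_mulVec, Matrix.dotProduct_mulVec,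
      ← Matrix.mulVec_transpose, ← hUdef, ← hw]
    simp [dotProduct, Matrix.mulVec_diagonal]
    exact Finset.sum_congr rfl fun i _ => by ring
  rw [hxw, hquad]
  simp only [dotProduct]
  rw [Finset.mul_sum]
  apply Finset.sum_le_sum
  intro i _
  nlinarith [mul_self_nonneg (w i), hc i]


lemma key_det {n p : ℕ} (hn : 0 < n)
    (X : Matrix (Fin n) (Fin p) ℝ) (hH : (Xᵀ * X).IsHermitian)
    (b : ℝ) (hb : 0 < b) (heigLB : ∀ i, b * n ≤ hH.eigenvalues i)
    (l2 l1 : ℝ) (hl2 : 0 ≤ l2) (hl1 : 0 ≤ l1)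
    (bstar : Fin p → ℝ) (e : Fin n → ℝ) (bh : Fin p → ℝ)
    (hmin : ∀ β : Fin p → ℝ,
      (∑ i, ((X.mulVec bstar + e) i - X.mulVec bh i) ^ 2)
          + l2 * ∑ j, (bh j) ^ 2 + l1 * ∑ j, |bh j| ≤
        (∑ i, ((X.mulVec bstar + e) i - X.mulVec β i) ^ 2)
          + l2 * ∑ j, (β j) ^ 2 + l1 * ∑ j, |β j|) :
    ∑ j, (bh j - bstar j) ^ 2 ≤
      (2 * ∑ j, (∑ i, X i j * e i) ^ 2 + 4 * l2 ^ 2 * ∑ j, (bstar j) ^ 2 + l1 ^ 2 * p)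
        / (b * n + l2) ^ 2 := by
  set u : Fin p → ℝ := fun j => bstar j - bh j with hu
  set s : Fin n → ℝ := X.mulVec u with hs
  set v : Fin p → ℝ := fun j => ∑ i, X i j * e i with hv
  set S : ℝ := ∑ j, (u j) ^ 2 with hS
  set A2 : ℝ := ∑ j, (v j) ^ 2 with hA2
  set C2 : ℝ := ∑ j, (bstar j) ^ 2 with hC2
  set K : ℝ := (∑ i, (s i) ^ 2) + l2 * S with hK
  have hD : 0 < b * n + l2 := by
    have : (1:ℝ) ≤ n := by exact_mod_cast hn
    nlinarith
  have hS0 : 0 ≤ S := Finset.sum_nonneg fun j _ => sq_nonneg _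
  have hA20 : 0 ≤ A2 := Finset.sum_nonneg fun j _ => sq_nonneg _
  have hC20 : 0 ≤ C2 := Finset.sum_nonneg fun j _ => sq_nonneg _
  have hs20 : (0:ℝ) ≤ ∑ i, (s i)^2 := Finset.sum_nonneg fun i _ => sq_nonneg _
  have hK0 : 0 ≤ K := by rw [hK]; nlinarith
  have hXu : ∀ i, X.mulVec bstar i - X.mulVec bh i = s i := by
    intro i
    simp only [hs, hu, Matrix.mulVec, dotProduct, mul_sub, Finset.sum_sub_distrib]
  have hres_hat : ∀ i, (X.mulVec bstar + e) i - X.mulVec bh i = e i + s i := by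
    intro i; rw [← hXu i]; simp; ring
  set F : ℝ := (∑ i, (e i + s i) ^ 2) + l2 * ∑ j, (bh j) ^ 2 + l1 * ∑ j, |bh j| with hF
  set G : ℝ := (∑ i, (e i) ^ 2) + l2 * C2 + l1 * ∑ j, |bstar j| with hG
  -- strong convexity step
  have hstep : ∀ t : ℝ, 0 < t → t ≤ 1 → (1 - t) * K ≤ G - F := by
    intro t ht ht1
    have hmint := hmin (fun j => bh j + t * u j)
    have hXt : ∀ i, (X.mulVec bstar + e) i - X.mulVec (fun j => bh j + t * u j) i
        = (e i + s i) - t * s i := by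
      intro i
      have : X.mulVec (fun j => bh j + t * u j) i = X.mulVec bh i + t * s i := by
        simp only [hs, Matrix.mulVec, dotProduct, Finset.mul_sum, ← Finset.sum_add_distrib]
        exact Finset.sum_congr rfl fun j _ => by ring
      rw [this, ← hres_hat i]; ring
    rw [show (∑ i, ((X.mulVec bstar + e) i - X.mulVec (fun j => bh j + t * u j) i) ^ 2)
        = ∑ i, ((e i + s i) - t * s i) ^ 2 from Finset.sum_congr rfl fun i _ => by rw [hXt i],
      show (∑ i, ((X.mulVec bstar + e) i - X.mulVec bh i) ^ 2) = ∑ i, (e i + s i) ^ 2 from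
        Finset.sum_congr rfl fun i _ => by rw [hres_hat i]] at hmint
    have h1 : ∑ i, ((e i + s i) - t * s i) ^ 2
        = (1 - t) * (∑ i, (e i + s i) ^ 2) + t * (∑ i, (e i) ^ 2)
          - t * (1 - t) * (∑ i, (s i) ^ 2) := by
      rw [Finset.mul_sum, Finset.mul_sum, Finset.mul_sum, ← Finset.sum_add_distrib,
        ← Finset.sum_sub_distrib]
      exact Finset.sum_congr rfl fun i _ => by ring
    have h2 : ∑ j, (bh j + t * u j) ^ 2
        = (1 - t) * (∑ j, (bh j) ^ 2) + t * C2 - t * (1 - t) * S := by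
      rw [hC2, hS, Finset.mul_sum, Finset.mul_sum, Finset.mul_sum, ← Finset.sum_add_distrib,
        ← Finset.sum_sub_distrib]
      exact Finset.sum_congr rfl fun j _ => by simp only [hu]; ring
    have h3 : ∑ j, |bh j + t * u j| ≤ (1 - t) * (∑ j, |bh j|) + t * ∑ j, |bstar j| := by
      rw [Finset.mul_sum, Finset.mul_sum, ← Finset.sum_add_distrib]
      apply Finset.sum_le_sum
      intro j _
      have hjj : bh j + t * u j = (1 - t) * bh j + t * bstar j := by simp only [hu]; ring
      rw [hjj]
      calc |(1 - t) * bh j + t * bstar j| ≤ |(1-t) * bh j| + |t * bstar j| := abs_add_le _ _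
        _ = (1 - t) * |bh j| + t * |bstar j| := by
            rw [abs_mul, abs_mul, abs_of_nonneg (by linarith), abs_of_nonneg ht.le]
    rw [h1, h2] at hmint
    have h4 := mul_le_mul_of_nonneg_left h3 hl1
    have h6 : (1 - t) * (∑ i, (e i + s i) ^ 2) + t * (∑ i, (e i) ^ 2)
          - t * (1 - t) * (∑ i, (s i) ^ 2)
        + l2 * ((1 - t) * (∑ j, (bh j) ^ 2) + t * C2 - t * (1 - t) * S)
        + l1 * ((1 - t) * (∑ j, |bh j|) + t * ∑ j, |bstar j|)
        = (1 - t) * F + t * G - t * (1 - t) * K := by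
      rw [hF, hG, hK]; ring
    have h5 : F ≤ (1 - t) * F + t * G - t * (1 - t) * K := by
      rw [← h6]; rw [hF]; linarith [hmint, h4]
    have h7 : t * ((1 - t) * K) ≤ t * (G - F) := by nlinarith [h5]
    exact le_of_mul_le_mul_left h7 ht
  have hKM : K ≤ G - F := limit_aux hK0 hstep
  -- expand
  have hexp : ∑ i, (e i + s i) ^ 2
      = (∑ i, (e i) ^ 2) + 2 * (∑ i, e i * s i) + ∑ i, (s i) ^ 2 := by
    rw [Finset.mul_sum, ← Finset.sum_add_distrib, ← Finset.sum_add_distrib]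
    exact Finset.sum_congr rfl fun i _ => by ring
  have hbh2 : ∑ j, (bh j) ^ 2 = C2 - 2 * (∑ j, bstar j * u j) + S := by
    rw [hC2, hS, Finset.mul_sum, ← Finset.sum_sub_distrib, ← Finset.sum_add_distrib]
    exact Finset.sum_congr rfl fun j _ => by simp only [hu]; ring
  have hKM' : (∑ i, (s i)^2) + l2 * S ≤
      (∑ i, (e i) ^ 2) + l2 * C2 + l1 * ∑ j, |bstar j|
      - ((∑ i, (e i)^2) + 2 * (∑ i, e i * s i) + (∑ i, (s i)^2)
        + l2 * (C2 - 2 * (∑ j, bstar j * u j) + S) + l1 * ∑ j, |bh j|) := by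
    rw [hK, hF, hG, hexp, hbh2] at hKM
    linarith [hKM]
  -- bounds
  have ha : b * n * S ≤ ∑ i, (s i) ^ 2 := by
    have h := quadform_ge (Xᵀ * X) hH (b * n) heigLB u
    have h1 : u ⬝ᵥ u = S := by
      rw [hS]; exact Finset.sum_congr rfl fun j _ => by rw [sq]
    have h2 : u ⬝ᵥ (Xᵀ * X).mulVec u = ∑ i, (s i) ^ 2 := by
      rw [← Matrix.mulVec_mulVec, Matrix.dotProduct_mulVec, Matrix.vecMul_transpose, ← hs]
      exact Finset.sum_congr rfl fun i _ => by rw [sq]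
    rw [h1, h2] at h; exact h
  set T : ℝ := Real.sqrt S with hT
  set a : ℝ := Real.sqrt A2 with ha'
  set c : ℝ := Real.sqrt C2 with hc'
  set q : ℝ := Real.sqrt p with hq'
  have hb1 : -(∑ i, e i * s i) ≤ a * T := by
    have h1 : ∑ i, e i * s i = ∑ j, v j * u j := by
      rw [hs, hv]
      simp only [Matrix.mulVec, dotProduct, Finset.mul_sum, Finset.sum_mul]
      rw [Finset.sum_comm]
      exact Finset.sum_congr rfl fun j _ => Finset.sum_congr rfl fun i _ => by ring
    have h2 : -(∑ j, v j * u j) = ∑ j, (-(v j)) * u j := by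
      rw [← Finset.sum_neg_distrib]
      exact Finset.sum_congr rfl fun j _ => by ring
    rw [h1, h2]
    calc ∑ j, (-(v j)) * u j
        ≤ Real.sqrt (∑ j, (-(v j)) ^ 2) * Real.sqrt (∑ j, (u j) ^ 2) :=
          Real.sum_mul_le_sqrt_mul_sqrt _ _ _
      _ = a * T := by rw [ha', hT, hA2]; congr 1; congr 1
                      exact Finset.sum_congr rfl fun j _ => by rw [neg_sq]
  have hb2 : ∑ j, bstar j * u j ≤ c * T := by
    calc ∑ j, bstar j * u j
        ≤ Real.sqrt (∑ j, (bstar j) ^ 2) * Real.sqrt (∑ j, (u j) ^ 2) :=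
          Real.sum_mul_le_sqrt_mul_sqrt _ _ _
      _ = c * T := by rw [hc', hT, hC2]
  have hb3 : (∑ j, |bstar j|) - (∑ j, |bh j|) ≤ q * T := by
    have h1 : (∑ j, |bstar j|) - (∑ j, |bh j|) ≤ ∑ j, |u j| := by
      rw [← Finset.sum_sub_distrib]
      apply Finset.sum_le_sum
      intro j _
      have := abs_sub_abs_le_abs_sub (bstar j) (bh j)
      simpa [hu] using this
    have h2 : ∑ j, |u j| ≤ q * T := by
      calc ∑ j, |u j| = ∑ j, 1 * |u j| := by simp
        _ ≤ Real.sqrt (∑ _j : Fin p, (1:ℝ) ^ 2) * Real.sqrt (∑ j, |u j| ^ 2) :=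
            Real.sum_mul_le_sqrt_mul_sqrt _ _ _
        _ = q * T := by
            rw [hq', hT, hS]
            congr 1
            · congr 1; simp
            · congr 1; exact Finset.sum_congr rfl fun j _ => by rw [sq_abs]
    exact h1.trans h2
  have hgoal : ∑ j, (bh j - bstar j) ^ 2 = S := by
    rw [hS]; exact Finset.sum_congr rfl fun j _ => by simp only [hu]; ring
  have hT0 : 0 ≤ T := Real.sqrt_nonneg _
  have hT2 : T ^ 2 = S := Real.sq_sqrt hS0
  have ha2 : a ^ 2 = A2 := Real.sq_sqrt hA20
  have hc2 : c ^ 2 = C2 := Real.sq_sqrt hC20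
  have hq2 : q ^ 2 = (p:ℝ) := Real.sq_sqrt (Nat.cast_nonneg p)
  have ha0 : 0 ≤ a := Real.sqrt_nonneg _
  have hc0 : 0 ≤ c := Real.sqrt_nonneg _
  have hq0 : 0 ≤ q := Real.sqrt_nonneg _
  clear_value u s v S A2 C2 K F G T a c q
  clear hmin hstep hKM hexp hbh2 hXu hres_hat hu hs hv hK hF hG hT ha' hc' hq' hK0 hs20
  have hl2b2 : l2 * (∑ j, bstar j * u j) ≤ l2 * (c * T) := mul_le_mul_of_nonneg_left hb2 hl2
  have hl1b3 : l1 * ((∑ j, |bstar j|) - (∑ j, |bh j|)) ≤ l1 * (q * T) :=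
    mul_le_mul_of_nonneg_left hb3 hl1
  have hcomb : 2 * (b * n + l2) * S ≤ (2 * a + 2 * l2 * c + l1 * q) * T := by
    linarith [hKM', ha, hb1, hl2b2, hl1b3]
  -- finish
  rw [hgoal, le_div_iff₀ (by positivity)]
  exact final_aux hD hA20 hC20 (Nat.cast_nonneg p) hl1 hl2 hT0 hT2 ha2 hc2 hq2 ha0 hc0 hq0 hcomb

/-- Theorem 3.1, special case: the (unweighted) elastic-net estimator satisfies
`E‖β̂(λ₂,λ₁) - β*‖₂² ≤ 4 (λ₂²‖β*‖₂² + Bpnσ² + λ₁² p) / (bn + λ₂)²`. -/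
theorem stmt_8 {n p : ℕ} (hn : 0 < n) (hp : 0 < p)
    {Ω : Type*} [MeasureSpace Ω] (μ : Measure Ω) [IsProbabilityMeasure μ]
    (X : Matrix (Fin n) (Fin p) ℝ) (hH : (Xᵀ * X).IsHermitian)
    (b B : ℝ) (hb : 0 < b) (hbB : b ≤ B)
    (heigLB : ∀ i, b * n ≤ hH.eigenvalues i)
    (heigUB : ∀ i, hH.eigenvalues i ≤ B * n)
    (l2 l1 : ℝ) (hl2 : 0 ≤ l2) (hl1 : 0 ≤ l1)
    (bstar : Fin p → ℝ) (σ : ℝ)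
    (eps : Ω → Fin n → ℝ)
    (hint1 : ∀ i, Integrable (fun ω => eps ω i) μ)
    (hint2 : ∀ i j, Integrable (fun ω => eps ω i * eps ω j) μ)
    (hmean : ∀ i, ∫ ω, eps ω i ∂μ = 0)
    (hcov : ∀ i j, ∫ ω, eps ω i * eps ω j ∂μ = if i = j then σ ^ 2 else 0)
    (bhat : Ω → Fin p → ℝ)
    (hbhat : ∀ ω, ∀ β : Fin p → ℝ,
      (∑ i, ((X.mulVec bstar + eps ω) i - X.mulVec (bhat ω) i) ^ 2)
          + l2 * ∑ j, (bhat ω j) ^ 2 + l1 * ∑ j, |bhat ω j| ≤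
        (∑ i, ((X.mulVec bstar + eps ω) i - X.mulVec β i) ^ 2)
          + l2 * ∑ j, (β j) ^ 2 + l1 * ∑ j, |β j|)
    (hintmse : Integrable (fun ω => ∑ j, (bhat ω j - bstar j) ^ 2) μ) :
    ∫ ω, ∑ j, (bhat ω j - bstar j) ^ 2 ∂μ ≤
      4 * (l2 ^ 2 * ∑ j, (bstar j) ^ 2 + B * p * n * σ ^ 2 + l1 ^ 2 * p)
        / (b * n + l2) ^ 2 := by
  classical
  set c0 : ℝ := 4 * l2 ^ 2 * (∑ j, (bstar j) ^ 2) + l1 ^ 2 * (p:ℝ) with hc0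
  have hpt : ∀ ω, ∑ j, (bhat ω j - bstar j) ^ 2 ≤
      (2 * ∑ j, (∑ i, X i j * eps ω i) ^ 2 + c0) / (b * n + l2) ^ 2 := by
    intro ω
    have := key_det hn X hH b hb heigLB l2 l1 hl2 hl1 bstar (eps ω) (bhat ω) (hbhat ω)
    rw [hc0]
    calc ∑ j, (bhat ω j - bstar j) ^ 2 ≤ _ := this
      _ = _ := by ring_nf
  have hsqeq : ∀ j : Fin p, (fun ω => (∑ i, X i j * eps ω i) ^ 2)
      = fun ω => ∑ i, ∑ k, (X i j * X k j) * (eps ω i * eps ω k) := by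
    intro j
    funext ω
    rw [sq, Finset.sum_mul_sum]
    exact Finset.sum_congr rfl fun i _ => Finset.sum_congr rfl fun k _ => by ring
  have hintA : ∀ j : Fin p, Integrable (fun ω => (∑ i, X i j * eps ω i) ^ 2) μ := by
    intro j
    rw [hsqeq j]
    exact integrable_finset_sum _ fun i _ => integrable_finset_sum _ fun k _ =>
      (hint2 i k).const_mul _
  have hintA2 : Integrable (fun ω => ∑ j, (∑ i, X i j * eps ω i) ^ 2) μ :=
    integrable_finset_sum _ fun j _ => hintA j
  have hintRHS : Integrable
      (fun ω => (2 * ∑ j, (∑ i, X i j * eps ω i) ^ 2 + c0) / (b * n + l2) ^ 2) μ :=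
    ((hintA2.const_mul 2).add (integrable_const _)).div_const _
  have hmono := integral_mono hintmse hintRHS hpt
  -- compute the expectation of the quadratic term
  have hEA : ∀ j : Fin p, ∫ ω, (∑ i, X i j * eps ω i) ^ 2 ∂μ = (∑ i, (X i j) ^ 2) * σ ^ 2 := by
    intro j
    rw [hsqeq j]
    rw [integral_finset_sum _ (fun i _ => integrable_finset_sum _ fun k _ =>
      (hint2 i k).const_mul _)]
    have : ∀ i : Fin n, ∫ ω, ∑ k, (X i j * X k j) * (eps ω i * eps ω k) ∂μ
        = (X i j) ^ 2 * σ ^ 2 := by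
      intro i
      rw [integral_finset_sum _ (fun k _ => (hint2 i k).const_mul _)]
      have h2 : ∀ k : Fin n, ∫ ω, (X i j * X k j) * (eps ω i * eps ω k) ∂μ
          = (X i j * X k j) * (if i = k then σ ^ 2 else 0) := by
        intro k
        rw [integral_const_mul, hcov i k]
      simp only [h2, mul_ite, mul_zero]
      rw [Finset.sum_ite_eq Finset.univ i (fun k => X i j * X k j * σ ^ 2)]
      simp [sq]
    simp only [this]
    rw [← Finset.sum_mul]
  have hEA2 : ∫ ω, ∑ j, (∑ i, X i j * eps ω i) ^ 2 ∂μ = (∑ j, ∑ i, (X i j) ^ 2) * σ ^ 2 := by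
    rw [integral_finset_sum _ (fun j _ => hintA j)]
    simp only [hEA]
    rw [← Finset.sum_mul]
  -- trace bound
  have htr : (∑ j, ∑ i, (X i j) ^ 2) ≤ (p:ℝ) * (B * n) := by
    have h1 : (∑ j, ∑ i, (X i j) ^ 2) = (Xᵀ * X).trace := by
      simp only [Matrix.trace, Matrix.diag, Matrix.mul_apply, Matrix.transpose_apply, sq]
    rw [h1, trace_eq_sum_eig _ hH]
    calc ∑ i, hH.eigenvalues i ≤ ∑ _i : Fin p, B * n :=
          Finset.sum_le_sum fun i _ => heigUB i
      _ = (p:ℝ) * (B * n) := by simp [Finset.sum_const]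
  -- compute the integral of the RHS
  have hERHS : ∫ ω, (2 * ∑ j, (∑ i, X i j * eps ω i) ^ 2 + c0) / (b * n + l2) ^ 2 ∂μ
      = (2 * ((∑ j, ∑ i, (X i j) ^ 2) * σ ^ 2) + c0) / (b * n + l2) ^ 2 := by
    rw [integral_div, integral_add (hintA2.const_mul 2) (integrable_const _),
      integral_const_mul, hEA2, integral_const]
    simp
  rw [hERHS] at hmono
  refine hmono.trans ?_
  have hD : 0 < b * n + l2 := by
    have : (1:ℝ) ≤ n := by exact_mod_cast hn
    nlinarith
  rw [div_le_div_iff_of_pos_right (by positivity)]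
  have hB0 : 0 ≤ B := le_of_lt (lt_of_lt_of_le hb hbB)
  have hn0 : (0:ℝ) ≤ (n:ℝ) := Nat.cast_nonneg n
  have hp0 : (0:ℝ) ≤ (p:ℝ) := Nat.cast_nonneg p
  have hσ : (0:ℝ) ≤ σ ^ 2 := sq_nonneg σ
  have h1 : 2 * ((∑ j, ∑ i, (X i j) ^ 2) * σ ^ 2) ≤ 2 * ((p:ℝ) * (B * n) * σ ^ 2) := by
    nlinarith [htr, hσ]
  have h2 : 0 ≤ B * (p:ℝ) * (n:ℝ) * σ ^ 2 := by
    apply mul_nonneg; apply mul_nonneg; apply mul_nonneg hB0 hp0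
    exact hn0
    exact hσ
  have h3 : 0 ≤ l1 ^ 2 * (p:ℝ) := mul_nonneg (sq_nonneg _) hp0
  rw [hc0]
  nlinarith [h1, h2, h3]
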